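/- Let M be a compact Riemannian manifold, γ : [0,1] → M a geodesic lying in the interior of a minimizing geodesic, and Π : T_{γ(1)}M → T_{γ(0)}M the reverse Riemannian parallel transport along γ. For Q ∈ ℕ, set γ_i(u) = γ((i+u)/Q) and define P_i : T_{γ_i(1)}M → T_{γ_i(0)}M as P_i = (d exp_{γ_i(0)})^{-1} composed appropriately, i.e., P_i(v) = j_v'(0) where j_v is the Jacobi field along γ_i with j_v(0)=0, j_v(1)=v. Then lim_{Q→∞} P_0 ∘ P_1 ∘ ⋯ ∘ P_{Q−1} = Π in operator norm. -/

import Mathlib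

open Filter
open scoped Topology

section Auxiliary

open MeasureTheory intervalIntegral

set_option maxHeartbeats 1000000

variable {E : Type*} [NormedAddCommGroup E] [NormedSpace ℝ E] [CompleteSpace E]

lemma hasDerivAt_prim {ψ : ℝ → E} (hψ : Continuous ψ) (t : ℝ) :
    HasDerivAt (fun t => ∫ s in (0:ℝ)..t, ψ s) (ψ t) t :=
  integral_hasDerivAt_right (hψ.intervalIntegrable _ _)
    (hψ.stronglyMeasurableAtFilter _ _) hψ.continuousAt

omit [CompleteSpace E] in
lemma volterra_eq {ψ : ℝ → E} (hψ : Continuous ψ) (t : ℝ) :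
    ∫ s in (0:ℝ)..t, (t - s) • ψ s
      = t • (∫ s in (0:ℝ)..t, ψ s) - ∫ s in (0:ℝ)..t, s • ψ s := by
  have h1 : IntervalIntegrable (fun s : ℝ => t • ψ s) volume 0 t :=
    (hψ.const_smul t).intervalIntegrable _ _
  have h2 : IntervalIntegrable (fun s : ℝ => s • ψ s) volume 0 t := by
    have : Continuous fun s : ℝ => s • ψ s := continuous_id.smul hψ
    exact this.intervalIntegrable _ _
  rw [← intervalIntegral.integral_smul, ← intervalIntegral.integral_sub h1 h2]
  apply intervalIntegral.integral_congr
  intro s _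
  simp [sub_smul]

lemma volterra_hasDerivAt {ψ : ℝ → E} (hψ : Continuous ψ) (t : ℝ) :
    HasDerivAt (fun t => ∫ s in (0:ℝ)..t, (t - s) • ψ s)
      (∫ s in (0:ℝ)..t, ψ s) t := by
  have h1 : HasDerivAt (fun t => t • (∫ s in (0:ℝ)..t, ψ s))
      (t • ψ t + (1:ℝ) • (∫ s in (0:ℝ)..t, ψ s)) t :=
    (hasDerivAt_id t).smul (hasDerivAt_prim hψ t)
  have h2 : HasDerivAt (fun t => ∫ s in (0:ℝ)..t, s • ψ s) (t • ψ t) t :=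
    hasDerivAt_prim (continuous_id.smul hψ) t
  have h3 := h1.sub h2
  simp only [one_smul, add_sub_cancel_left] at h3
  simpa only [funext fun t => volterra_eq hψ t, Pi.sub_def] using h3

lemma key (ρ : ℝ → E →L[ℝ] E) (hρ : Continuous ρ) (C ε : ℝ) (hC : 0 ≤ C) (hε : 0 ≤ ε)
    (hbound : ∀ s ∈ Set.Icc (0:ℝ) 1, ‖ρ s‖ ≤ C)
    (hsmall : ε * C ≤ 1/8) (v : E) :
    ∃ w : E, ‖w - v‖ ≤ 4 * (ε * C) * ‖v‖ ∧
      ∃ j : ℝ → E, ContDiff ℝ 2 j ∧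
        (∀ u ∈ Set.Icc (0:ℝ) 1, deriv (deriv j) u + ε • ρ u (j u) = 0) ∧
        j 0 = 0 ∧ j 1 = v ∧ deriv j 0 = w := by
  classical
  set proj : ℝ → Set.Icc (0:ℝ) 1 := Set.projIcc (0:ℝ) 1 zero_le_one with hproj
  have hcont : ∀ f : C(Set.Icc (0:ℝ) 1, E), Continuous fun s : ℝ => ρ s (f (proj s)) :=
    fun f => hρ.clm_apply (f.continuous.comp continuous_projIcc)
  set Lfun : C(Set.Icc (0:ℝ) 1, E) → C(Set.Icc (0:ℝ) 1, E) := fun f =>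
    ⟨fun t => ∫ s in (0:ℝ)..(t:ℝ), ((t:ℝ) - s) • ρ s (f (proj s)), by
      exact (continuous_iff_continuousAt.2 fun t =>
        (volterra_hasDerivAt (hcont f) t).continuousAt).comp continuous_subtype_val⟩
    with hLfun
  have hLapply : ∀ f (t : Set.Icc (0:ℝ) 1),
      Lfun f t = ∫ s in (0:ℝ)..(t:ℝ), ((t:ℝ) - s) • ρ s (f (proj s)) := fun f t => rfl
  have hLnorm : ∀ f, ‖Lfun f‖ ≤ C * ‖f‖ := by
    intro f
    apply ContinuousMap.norm_le _ (mul_nonneg hC (norm_nonneg f)) |>.2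
    intro t
    rw [hLapply]
    have hb : ∀ x ∈ Set.uIoc (0:ℝ) (t:ℝ), ‖((t:ℝ) - x) • ρ x (f (proj x))‖ ≤ C * ‖f‖ := by
      intro x hx
      rw [Set.uIoc_of_le t.2.1] at hx
      have hx0 : (0:ℝ) ≤ x := le_of_lt hx.1
      have hx1 : x ≤ 1 := hx.2.trans t.2.2
      rw [norm_smul, Real.norm_eq_abs]
      have habs : |(t:ℝ) - x| ≤ 1 := by
        rw [abs_le]; constructor <;> nlinarith [t.2.1, t.2.2]
      have hnorm : ‖ρ x (f (proj x))‖ ≤ C * ‖f‖ := by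
        calc ‖ρ x (f (proj x))‖ ≤ ‖ρ x‖ * ‖f (proj x)‖ := (ρ x).le_opNorm _
        _ ≤ C * ‖f‖ := by
            apply mul_le_mul (hbound x ⟨hx0, hx1⟩) (f.norm_coe_le_norm _) (norm_nonneg _) hC
      calc |(t:ℝ) - x| * ‖ρ x (f (proj x))‖ ≤ 1 * (C * ‖f‖) := by
            apply mul_le_mul habs hnorm (norm_nonneg _) zero_le_one
      _ = C * ‖f‖ := one_mul _
    calc ‖∫ s in (0:ℝ)..(t:ℝ), ((t:ℝ) - s) • ρ s (f (proj s))‖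
        ≤ C * ‖f‖ * |(t:ℝ) - 0| := intervalIntegral.norm_integral_le_of_norm_le_const hb
      _ ≤ C * ‖f‖ * 1 := by
          apply mul_le_mul_of_nonneg_left _ (mul_nonneg hC (norm_nonneg f))
          rw [sub_zero, abs_of_nonneg t.2.1]; exact t.2.2
      _ = C * ‖f‖ := mul_one _
  -- linearity
  have hintg : ∀ (f : C(Set.Icc (0:ℝ) 1, E)) (t : ℝ),
      IntervalIntegrable (fun s => (t - s) • ρ s (f (proj s))) volume 0 t := by
    intro f t
    exact ((continuous_const.sub continuous_id).smul (hcont f)).intervalIntegrable _ _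
  have hadd : ∀ f g, Lfun (f + g) = Lfun f + Lfun g := by
    intro f g
    ext t
    rw [ContinuousMap.add_apply, hLapply, hLapply, hLapply,
      ← intervalIntegral.integral_add (hintg f _) (hintg g _)]
    apply intervalIntegral.integral_congr
    intro s _
    show ((t:ℝ) - s) • ρ s ((f + g) (proj s))
      = ((t:ℝ) - s) • ρ s (f (proj s)) + ((t:ℝ) - s) • ρ s (g (proj s))
    rw [ContinuousMap.add_apply, (ρ s).map_add, smul_add]
  have hsmul : ∀ (c : ℝ) f, Lfun (c • f) = c • Lfun f := by
    intro c f
    ext t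
    rw [ContinuousMap.smul_apply, hLapply, hLapply, ← intervalIntegral.integral_smul]
    apply intervalIntegral.integral_congr
    intro s _
    show ((t:ℝ) - s) • ρ s ((c • f) (proj s)) = c • (((t:ℝ) - s) • ρ s (f (proj s)))
    rw [ContinuousMap.smul_apply, (ρ s).map_smul, smul_comm]
  set Lop : C(Set.Icc (0:ℝ) 1, E) →L[ℝ] C(Set.Icc (0:ℝ) 1, E) :=
    LinearMap.mkContinuous
      { toFun := Lfun, map_add' := hadd, map_smul' := hsmul } C hLnorm with hLop
  have hLopapply : ∀ f, Lop f = Lfun f := fun f => rfl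
  -- the unit 1 + ε • Lop
  have hεLnorm : ‖ε • Lop‖ ≤ ε * C := by
    apply ContinuousLinearMap.opNorm_le_bound _ (by positivity)
    intro f
    calc ‖(ε • Lop) f‖ = ‖ε • Lop f‖ := rfl
      _ ≤ ‖ε‖ * ‖Lop f‖ := @norm_smul_le ℝ C(Set.Icc (0:ℝ) 1, E) _ _ _ _ ε (Lop f)
      _ = ε * ‖Lfun f‖ := by rw [Real.norm_of_nonneg hε, hLopapply]
      _ ≤ ε * (C * ‖f‖) := mul_le_mul_of_nonneg_left (hLnorm f) hε
      _ = ε * C * ‖f‖ := by ring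
  have hu : ‖-(ε • Lop)‖ < 1 := by
    rw [ContinuousLinearMap.opNorm_neg]; linarith
  set uu := Units.oneSub (-(ε • Lop)) hu with huu
  have huval : (uu : _ →L[ℝ] _) = 1 + ε • Lop := by
    rw [huu, Units.val_oneSub, sub_neg_eq_add]
  -- the map g : w ↦ (t ↦ t • w) as a continuous linear map
  set gm : E →L[ℝ] C(Set.Icc (0:ℝ) 1, E) := LinearMap.mkContinuous
    { toFun := fun w => ⟨fun t => (t:ℝ) • w, (continuous_subtype_val.smul continuous_const)⟩
      map_add' := fun a b => by ext t; exact smul_add _ a b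
      map_smul' := fun c a => by ext t; exact smul_comm _ c a } 1
    (by
      intro w
      rw [one_mul]
      apply ContinuousMap.norm_le _ (norm_nonneg w) |>.2
      intro t
      show ‖(t:ℝ) • w‖ ≤ ‖w‖
      rw [norm_smul, Real.norm_eq_abs, abs_of_nonneg t.2.1]
      nlinarith [t.2.2, norm_nonneg w]) with hgm
  have hgmapply : ∀ w (t : Set.Icc (0:ℝ) 1), gm w t = (t:ℝ) • w := fun w t => rfl
  have hgmnorm : ∀ w, ‖gm w‖ ≤ ‖w‖ := by
    intro w
    apply ContinuousMap.norm_le _ (norm_nonneg w) |>.2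
    intro t
    rw [hgmapply, norm_smul, Real.norm_eq_abs, abs_of_nonneg t.2.1]
    nlinarith [t.2.2, norm_nonneg w]
  have h1mem : (1:ℝ) ∈ Set.Icc (0:ℝ) 1 := Set.mem_Icc.mpr ⟨zero_le_one, le_rfl⟩
  set A : E →L[ℝ] E := (ContinuousMap.evalCLM ℝ (⟨1, h1mem⟩ : Set.Icc (0:ℝ) 1)).comp
    ((↑(uu⁻¹) : C(Set.Icc (0:ℝ) 1, E) →L[ℝ] C(Set.Icc (0:ℝ) 1, E)).comp gm) with hA
  have hAapply : ∀ w : E, A w = (↑(uu⁻¹) : C(Set.Icc (0:ℝ) 1, E) →L[ℝ] C(Set.Icc (0:ℝ) 1, E)) (gm w) ⟨1, h1mem⟩ := fun w => rfl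
  -- main construction for arbitrary w
  have main : ∀ w : E, ‖A w - w‖ ≤ 2 * (ε * C) * ‖w‖ ∧
      ∃ j : ℝ → E, ContDiff ℝ 2 j ∧
        (∀ u ∈ Set.Icc (0:ℝ) 1, deriv (deriv j) u + ε • ρ u (j u) = 0) ∧
        j 0 = 0 ∧ j 1 = A w ∧ deriv j 0 = w := by
    intro w
    set j₀ : C(Set.Icc (0:ℝ) 1, E) := (↑(uu⁻¹) : C(Set.Icc (0:ℝ) 1, E) →L[ℝ] C(Set.Icc (0:ℝ) 1, E)) (gm w) with hj₀
    have eq0 : j₀ + ε • Lop j₀ = gm w := by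
      have h := congrArg (fun T : C(Set.Icc (0:ℝ) 1, E) →L[ℝ] C(Set.Icc (0:ℝ) 1, E) =>
        T (gm w)) uu.mul_inv
      simp only [ContinuousLinearMap.mul_apply, ContinuousLinearMap.one_apply] at h
      rw [huval] at h
      simpa only [ContinuousLinearMap.add_apply, ContinuousLinearMap.one_apply,
        ContinuousLinearMap.smul_apply, ← hj₀] using h
    have hj₀norm : ‖j₀‖ ≤ 2 * ‖w‖ := by
      have h1 : ‖j₀‖ ≤ ‖gm w‖ + ε * (C * ‖j₀‖) := by
        have he : j₀ = gm w - ε • Lop j₀ := by rw [← eq0]; abel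
        calc ‖j₀‖ = ‖gm w - ε • Lop j₀‖ := by rw [← he]
          _ ≤ ‖gm w‖ + ‖ε • Lop j₀‖ := norm_sub_le _ _
          _ ≤ ‖gm w‖ + ε * (C * ‖j₀‖) := by
              have h2 := hLnorm j₀
              rw [← hLopapply] at h2
              have h3 : ‖ε • Lop j₀‖ ≤ ‖ε‖ * ‖Lop j₀‖ := @norm_smul_le ℝ C(Set.Icc (0:ℝ) 1, E) _ _ _ _ ε (Lop j₀)
              rw [Real.norm_of_nonneg hε] at h3
              nlinarith [norm_nonneg (Lop j₀)]
      nlinarith [hgmnorm w, norm_nonneg j₀, norm_nonneg w, mul_nonneg hε hC]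
    set ψ : ℝ → E := fun s => ρ s (j₀ (proj s)) with hψdef
    have hψ : Continuous ψ := hcont j₀
    set j : ℝ → E := fun t => t • w - ε • ∫ s in (0:ℝ)..t, (t - s) • ψ s with hjdef
    have agree : ∀ t (ht : t ∈ Set.Icc (0:ℝ) 1), j t = j₀ ⟨t, ht⟩ := by
      intro t ht
      have e := congrArg (fun f : C(Set.Icc (0:ℝ) 1, E) => f ⟨t, ht⟩) eq0
      simp only [ContinuousMap.add_apply, ContinuousMap.smul_apply] at e
      have hL : Lop j₀ ⟨t, ht⟩ = ∫ s in (0:ℝ)..t, (t - s) • ψ s := rfl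
      have hg : gm w ⟨t, ht⟩ = t • w := rfl
      rw [hL, hg] at e
      calc j t = t • w - ε • ∫ s in (0:ℝ)..t, (t - s) • ψ s := rfl
        _ = j₀ ⟨t, ht⟩ := by rw [← e]; abel
    have hderiv : ∀ t, HasDerivAt j (w - ε • ∫ s in (0:ℝ)..t, ψ s) t := by
      intro t
      have h1 : HasDerivAt (fun t : ℝ => t • w) ((1:ℝ) • w) t :=
        (hasDerivAt_id t).smul_const w
      have h2 : HasDerivAt (fun t => ε • ∫ s in (0:ℝ)..t, (t - s) • ψ s)
          (ε • ∫ s in (0:ℝ)..t, ψ s) t := (volterra_hasDerivAt hψ t).const_smul ε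
      simpa only [one_smul, Pi.sub_def] using h1.sub h2
    have hderiv1 : deriv j = fun t => w - ε • ∫ s in (0:ℝ)..t, ψ s :=
      funext fun t => (hderiv t).deriv
    have hd0 : deriv j 0 = w := by
      rw [hderiv1]
      simp [intervalIntegral.integral_same]
    have hderiv2 : ∀ t, HasDerivAt (deriv j) (-(ε • ψ t)) t := by
      intro t
      rw [hderiv1]
      have h2 : HasDerivAt (fun t => ε • ∫ s in (0:ℝ)..t, ψ s) (ε • ψ t) t :=
        (hasDerivAt_prim hψ t).const_smul ε
      simpa [Pi.sub_def] using (hasDerivAt_const t w).sub h2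
    have hdd : deriv (deriv j) = fun t => -(ε • ψ t) := funext fun t => (hderiv2 t).deriv
    have hcd : ContDiff ℝ 2 j := by
      rw [show (2 : WithTop ℕ∞) = 1 + 1 from by norm_num]
      refine contDiff_succ_iff_deriv.2 ⟨fun t => (hderiv t).differentiableAt, by simp, ?_⟩
      refine contDiff_one_iff_deriv.2 ⟨fun t => (hderiv2 t).differentiableAt, ?_⟩
      rw [hdd]
      exact ((hψ.const_smul ε).neg)
    have hODE : ∀ u ∈ Set.Icc (0:ℝ) 1, deriv (deriv j) u + ε • ρ u (j u) = 0 := by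
      intro u hu'
      rw [hdd]
      have h3 : ψ u = ρ u (j u) := by
        rw [hψdef]
        simp only
        rw [agree u hu', hproj, Set.projIcc_of_mem]
      simp only
      rw [← h3]
      exact neg_add_cancel _
    have hj0 : j 0 = 0 := by
      rw [hjdef]
      simp [intervalIntegral.integral_same]
    have hj1 : j 1 = A w := by rw [hAapply, ← hj₀]; exact agree 1 h1mem
    refine ⟨?_, j, hcd, hODE, hj0, hj1, hd0⟩
    · have e := congrArg (fun f : C(Set.Icc (0:ℝ) 1, E) => f ⟨1, h1mem⟩) eq0
      simp only [ContinuousMap.add_apply, ContinuousMap.smul_apply] at e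
      have hg : gm w ⟨1, h1mem⟩ = (1:ℝ) • w := rfl
      rw [hg, one_smul] at e
      have h4 : A w - w = -(ε • (Lop j₀) ⟨1, h1mem⟩) := by
        rw [hAapply, ← hj₀, ← e]; abel
      have h1 : ‖(Lop j₀) ⟨1, h1mem⟩‖ ≤ ‖Lop j₀‖ := (Lop j₀).norm_coe_le_norm _
      have h2 : ‖Lop j₀‖ ≤ C * ‖j₀‖ := by rw [hLopapply]; exact hLnorm j₀
      have h5 : ‖ε • (Lop j₀) ⟨1, h1mem⟩‖ ≤ ‖ε‖ * ‖(Lop j₀) ⟨1, h1mem⟩‖ := norm_smul_le _ _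
      rw [Real.norm_of_nonneg hε] at h5
      rw [h4, norm_neg]
      have h6 : ε * ‖(Lop j₀) ⟨1, h1mem⟩‖ ≤ 2 * (ε * C) * ‖w‖ := by
        nlinarith [norm_nonneg (Lop j₀), norm_nonneg j₀, norm_nonneg w,
          mul_le_mul_of_nonneg_left (h1.trans h2) hε,
          mul_le_mul_of_nonneg_left hj₀norm hC, mul_le_mul_of_nonneg_left
            (mul_le_mul_of_nonneg_left hj₀norm hC) hε]
      linarith
  -- invert A
  have hAbound : ‖(1 : E →L[ℝ] E) - A‖ ≤ 2 * (ε * C) := by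
    apply ContinuousLinearMap.opNorm_le_bound _ (by positivity)
    intro w
    rw [ContinuousLinearMap.sub_apply, ContinuousLinearMap.one_apply, norm_sub_rev]
    exact (main w).1.trans (by rw [mul_assoc])
  have hlt : ‖(1 : E →L[ℝ] E) - A‖ < 1 := lt_of_le_of_lt hAbound (by linarith)
  set uA := Units.oneSub ((1 : E →L[ℝ] E) - A) hlt with huA
  have huAval : (uA : E →L[ℝ] E) = A := by rw [huA, Units.val_oneSub, sub_sub_cancel]
  set w : E := (↑(uA⁻¹) : E →L[ℝ] E) v with hw
  have hAw : A w = v := by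
    have h := congrArg (fun T : E →L[ℝ] E => T v) uA.mul_inv
    simp only [ContinuousLinearMap.mul_apply, ContinuousLinearMap.one_apply] at h
    rw [huAval] at h
    exact h
  have hwv : ‖w - v‖ ≤ 4 * (ε * C) * ‖v‖ := by
    have h1 := (main w).1
    rw [hAw] at h1
    rw [norm_sub_rev] at h1
    have h2 : ‖w‖ ≤ ‖w - v‖ + ‖v‖ := by
      calc ‖w‖ = ‖(w - v) + v‖ := by rw [sub_add_cancel]
        _ ≤ ‖w - v‖ + ‖v‖ := norm_add_le _ _
    nlinarith [norm_nonneg (w - v), norm_nonneg v, norm_nonneg w, mul_nonneg hε hC]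
  obtain ⟨-, j, hcd, hODE, hj0, hj1, hd0⟩ := main w
  exact ⟨w, hwv, j, hcd, hODE, hj0, by rw [hj1, hAw], hd0⟩

lemma prod_bound (δ : ℝ) (hδ : 0 ≤ δ) :
    ∀ (n : ℕ) (f : ℕ → E →L[ℝ] E),
      (∀ i, i < n → ‖f i - ContinuousLinearMap.id ℝ E‖ ≤ δ) →
      ‖(List.range n).foldr (fun i acc => (f i).comp acc) (ContinuousLinearMap.id ℝ E)
        - ContinuousLinearMap.id ℝ E‖ ≤ (1 + δ)^n - 1 := by
  intro n
  induction n with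
  | zero => intro f hf; simp
  | succ n ih =>
    intro f hf
    rw [List.range_succ_eq_map, List.foldr_cons, List.foldr_map]
    have hB := ih (fun i => f (i + 1)) (fun i hi => hf (i + 1) (by omega))
    set B := (List.range n).foldr (fun i acc => (f (i + 1)).comp acc)
      (ContinuousLinearMap.id ℝ E) with hBdef
    have hBnorm : ‖B‖ ≤ (1 + δ)^n := by
      have h1 : ‖B‖ ≤ ‖B - ContinuousLinearMap.id ℝ E‖ + ‖ContinuousLinearMap.id ℝ E‖ := by
        calc ‖B‖ = ‖(B - ContinuousLinearMap.id ℝ E) + ContinuousLinearMap.id ℝ E‖ := by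
              rw [sub_add_cancel]
          _ ≤ _ := norm_add_le _ _
      have h2 : ‖ContinuousLinearMap.id ℝ E‖ ≤ 1 := ContinuousLinearMap.norm_id_le
      linarith
    have hkey : (f 0).comp B - ContinuousLinearMap.id ℝ E
        = ((f 0) - ContinuousLinearMap.id ℝ E).comp B + (B - ContinuousLinearMap.id ℝ E) := by
      rw [ContinuousLinearMap.sub_comp, ContinuousLinearMap.id_comp]
      abel
    have hpow : (0:ℝ) ≤ (1 + δ)^n := by positivity
    calc ‖(f 0).comp B - ContinuousLinearMap.id ℝ E‖
        ≤ ‖((f 0) - ContinuousLinearMap.id ℝ E).comp B‖ + ‖B - ContinuousLinearMap.id ℝ E‖ := by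
          rw [hkey]; exact norm_add_le _ _
      _ ≤ ‖f 0 - ContinuousLinearMap.id ℝ E‖ * ‖B‖ + ((1 + δ)^n - 1) :=
          add_le_add (ContinuousLinearMap.opNorm_comp_le _ _) hB
      _ ≤ δ * (1 + δ)^n + ((1 + δ)^n - 1) := by
          have := mul_le_mul (hf 0 (by omega)) hBnorm (norm_nonneg _) hδ
          linarith
      _ = (1 + δ)^(n + 1) - 1 := by ring

end Auxiliary

/-- Let `γ : [0,1] → M` be a geodesic inside the interior of a minimizing
geodesic. Trivializing the tangent bundle along `γ` by Riemannian parallel transport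
identifies all tangent spaces with a single inner product space `E`, turns the reverse
parallel transport `Π` into the identity map, and turns the Jacobi equation along
`γ_i(u) = γ((i+u)/Q)` into `j'' + Q⁻² R((i+u)/Q) j = 0`, where `R : ℝ → E →L[ℝ] E` is the
(continuous, self-adjoint) curvature operator `R(·, γ')γ'` along `γ`. The approximate
transports `P Q i : E →L[ℝ] E` are characterized by `P Q i v = j'(0)` for the Jacobi field
`j` along `γ_i` with `j(0) = 0`, `j(1) = v` (no conjugate points, so `j` is unique). Then
`P 0 ∘ P 1 ∘ ⋯ ∘ P (Q−1) → Π = id` in operator norm as `Q → ∞`. -/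
theorem stmt13 {E : Type*} [NormedAddCommGroup E] [InnerProductSpace ℝ E]
    [FiniteDimensional ℝ E]
    (R : ℝ → E →L[ℝ] E) (hR : Continuous R)
    (P : ℕ → ℕ → E →L[ℝ] E)
    (hP : ∀ Q : ℕ, 0 < Q → ∀ i : ℕ, i < Q → ∀ v : E, ∀ j : ℝ → E,
      ContDiff ℝ 2 j →
      (∀ u ∈ Set.Icc (0:ℝ) 1,
        deriv (deriv j) u + ((Q : ℝ) ^ 2)⁻¹ • R ((i + u) / Q) (j u) = 0) →
      j 0 = 0 → j 1 = v → P Q i v = deriv j 0) :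
    Tendsto
      (fun Q : ℕ =>
        ‖(List.range Q).foldr (fun i acc => (P Q i).comp acc)
            (ContinuousLinearMap.id ℝ E)
          - ContinuousLinearMap.id ℝ E‖)
      atTop (𝓝 0) := by
  obtain ⟨C₀, hC₀⟩ := isCompact_Icc.exists_bound_of_continuousOn
    (hR.continuousOn : ContinuousOn R (Set.Icc (0:ℝ) 1))
  set C : ℝ := max C₀ 0 with hCdef
  have hC : 0 ≤ C := le_max_right _ _
  have hCb : ∀ t ∈ Set.Icc (0:ℝ) 1, ‖R t‖ ≤ C := fun t ht =>
    (hC₀ t ht).trans (le_max_left _ _)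
  have htend : Tendsto (fun Q : ℕ => Real.exp (4 * C / Q) - 1) atTop (𝓝 0) := by
    have h1 : Tendsto (fun Q : ℕ => 4 * C / Q) atTop (𝓝 0) :=
      tendsto_const_div_atTop_nhds_zero_nat _
    have h2 := (Real.continuous_exp.tendsto 0).comp h1
    have h3 := h2.sub_const 1
    simpa using h3
  apply squeeze_zero' (Eventually.of_forall fun Q => norm_nonneg _) _ htend
  filter_upwards [eventually_ge_atTop (max 1 ⌈8 * C⌉₊)] with Q hQ
  have hQ1 : 1 ≤ Q := le_trans (le_max_left _ _) hQ
  have hQr : (1:ℝ) ≤ (Q:ℝ) := by exact_mod_cast hQ1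
  have hQpos : (0:ℝ) < (Q:ℝ) := by linarith
  have hQsq : (0:ℝ) < (Q:ℝ)^2 := by positivity
  have hε : (0:ℝ) ≤ ((Q:ℝ)^2)⁻¹ := by positivity
  have hQR : (8*C : ℝ) ≤ (Q:ℝ) := by
    have h := le_trans (le_max_right 1 ⌈8 * C⌉₊) hQ
    calc (8*C:ℝ) ≤ (⌈8*C⌉₊ : ℝ) := Nat.le_ceil _
      _ ≤ (Q:ℝ) := by exact_mod_cast h
  have hεC : ((Q:ℝ)^2)⁻¹ * C ≤ 1/8 := by
    have h8 : 8 * C ≤ (Q:ℝ)^2 := by nlinarith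
    have hinv : ((Q:ℝ)^2)⁻¹ * (Q:ℝ)^2 = 1 := inv_mul_cancel₀ (ne_of_gt hQsq)
    nlinarith [mul_le_mul_of_nonneg_left h8 hε]
  have hPnorm : ∀ i, i < Q → ‖P Q i - ContinuousLinearMap.id ℝ E‖
      ≤ 4 * (((Q:ℝ)^2)⁻¹ * C) := by
    intro i hi
    apply ContinuousLinearMap.opNorm_le_bound _ (by positivity)
    intro v
    have hρ : Continuous fun s : ℝ => R (((i:ℝ) + s) / Q) :=
      hR.comp ((continuous_const.add continuous_id).div_const _)
    have hbnd : ∀ s ∈ Set.Icc (0:ℝ) 1, ‖R (((i:ℝ) + s) / Q)‖ ≤ C := by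
      intro s hs
      apply hCb
      constructor
      · exact div_nonneg (add_nonneg (Nat.cast_nonneg i) hs.1) (le_of_lt hQpos)
      · rw [div_le_one hQpos]
        have h1 : i + 1 ≤ Q := hi
        have h2 : ((i:ℝ) + 1) ≤ (Q:ℝ) := by exact_mod_cast h1
        linarith [hs.2]
    obtain ⟨w, hwv, j, hcd, hODE, hj0, hj1, hd0⟩ :=
      key (fun s => R (((i:ℝ) + s) / Q)) hρ C ((Q:ℝ)^2)⁻¹ hC hε hbnd hεC v
    have hPv : P Q i v = w := by
      rw [hP Q (by omega) i hi v j hcd (fun u hu => hODE u hu) hj0 hj1, hd0]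
    calc ‖(P Q i - ContinuousLinearMap.id ℝ E) v‖ = ‖P Q i v - v‖ := by
          rw [ContinuousLinearMap.sub_apply, ContinuousLinearMap.id_apply]
      _ = ‖w - v‖ := by rw [hPv]
      _ ≤ 4 * (((Q:ℝ)^2)⁻¹ * C) * ‖v‖ := hwv
  have hmain := prod_bound _ (by positivity) Q (P Q) hPnorm
  have h1 : 1 + 4 * (((Q:ℝ)^2)⁻¹ * C) ≤ Real.exp (4 * (((Q:ℝ)^2)⁻¹ * C)) := by
    linarith [Real.add_one_le_exp (4 * (((Q:ℝ)^2)⁻¹ * C))]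
  have h2 : (1 + 4 * (((Q:ℝ)^2)⁻¹ * C))^Q ≤ Real.exp (4 * (((Q:ℝ)^2)⁻¹ * C))^Q := by
    apply pow_le_pow_left₀ _ h1
    positivity
  have h3 : Real.exp (4 * (((Q:ℝ)^2)⁻¹ * C))^Q
      = Real.exp ((Q:ℝ) * (4 * (((Q:ℝ)^2)⁻¹ * C))) := (Real.exp_nat_mul _ Q).symm
  have h4 : (Q:ℝ) * (4 * (((Q:ℝ)^2)⁻¹ * C)) = 4 * C / (Q:ℝ) := by
    field_simp
  rw [h3, h4] at h2
  linarith
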